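/- Let 0 < α ≤ 1, K ≥ 0 and f ∈ Σ(α,K). Then for every l ∈ ℕ and every 0 ≤ k < 2^l, the Haar coefficient satisfies |∫₀¹ f(x) ψ_{l,k}(x) dx| ≤ K * 2^{−l(α + 1/2)}. -/

import Mathlib

open MeasureTheory

/-- The Haar wavelet `ψ_{l,k}(x) = 2^{l/2} (1_{[1/2,1)} - 1_{[0,1/2)})(2^l x - k)`. -/
noncomputable def haar (l k : ℕ) (x : ℝ) : ℝ :=
  2 ^ ((l : ℝ) / 2) *
    ((Set.Ico (1 / 2 : ℝ) 1).indicator 1 (2 ^ l * x - k) -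
     (Set.Ico (0 : ℝ) (1 / 2 : ℝ)).indicator 1 (2 ^ l * x - k))

/-- If `f ∈ Σ(α,K)` with `0 < α ≤ 1`, `K ≥ 0`, then for all `l ∈ ℕ`,
`0 ≤ k < 2^l`, the Haar coefficient satisfies `|∫₀¹ f ψ_{l,k}| ≤ K 2^{-l(α+1/2)}`. -/
theorem stmt_3 (α K : ℝ) (hα : 0 < α) (hα1 : α ≤ 1) (hK : 0 ≤ K) (f : ℝ → ℝ)
    (hf : ∀ x ∈ Set.Ico (0 : ℝ) 1, ∀ y ∈ Set.Ico (0 : ℝ) 1, |f x - f y| ≤ K * |x - y| ^ α)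
    (l k : ℕ) (hk : k < 2 ^ l) :
    |∫ x in Set.Ico (0 : ℝ) 1, f x * haar l k x| ≤ K * 2 ^ (-(l : ℝ) * (α + 1 / 2)) := by
  set n : ℝ := 2 ^ l with hn_def
  have hn : (0 : ℝ) < n := by positivity
  set a : ℝ := k / n with ha_def
  set h : ℝ := 1 / (2 * n) with hh_def
  have hh : (0 : ℝ) < h := by positivity
  have han : a * n = k := div_mul_cancel₀ _ hn.ne'
  have hhn : h * (2 * n) = 1 := div_mul_cancel₀ _ (by positivity)
  have hkn : (k : ℝ) + 1 ≤ n := by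
    rw [hn_def]
    push_cast
    exact_mod_cast Nat.add_one_le_of_lt hk
  have ha0 : 0 ≤ a := by positivity
  have hub : a + 2 * h ≤ 1 := by
    rw [ha_def, hh_def]
    rw [div_add' _ _ _ hn.ne', div_le_one hn]
    · nlinarith
  set c : ℝ := 2 ^ ((l : ℝ) / 2) with hc_def
  have hc : (0 : ℝ) < c := by positivity
  -- membership rewrites
  have memR : ∀ x : ℝ, (n * x - k ∈ Set.Ico (1 / 2 : ℝ) 1) ↔ x ∈ Set.Ico (a + h) (a + 2 * h) := by
    intro x
    simp only [Set.mem_Ico]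
    constructor
    · rintro ⟨h1, h2⟩
      constructor <;> nlinarith
    · rintro ⟨h1, h2⟩
      constructor <;> nlinarith
  have memL : ∀ x : ℝ, (n * x - k ∈ Set.Ico (0 : ℝ) (1 / 2)) ↔ x ∈ Set.Ico a (a + h) := by
    intro x
    simp only [Set.mem_Ico]
    constructor
    · rintro ⟨h1, h2⟩
      constructor <;> nlinarith
    · rintro ⟨h1, h2⟩
      constructor <;> nlinarith
  -- rewrite the integrand
  have hrw : ∀ x : ℝ, f x * haar l k x
      = c * ((Set.Ico (a + h) (a + 2 * h)).indicator f x - (Set.Ico a (a + h)).indicator f x) := by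
    intro x
    have hR : (Set.Ico (1 / 2 : ℝ) 1).indicator (1 : ℝ → ℝ) ((2 : ℝ) ^ l * x - k)
        = (Set.Ico (a + h) (a + 2 * h)).indicator (1 : ℝ → ℝ) x := by
      rw [← hn_def]
      by_cases hx : x ∈ Set.Ico (a + h) (a + 2 * h)
      · rw [Set.indicator_of_mem ((memR x).mpr hx), Set.indicator_of_mem hx]
        simp
      · rw [Set.indicator_of_notMem (fun hcc => hx ((memR x).mp hcc)),
          Set.indicator_of_notMem hx]
    have hL : (Set.Ico (0 : ℝ) (1 / 2)).indicator (1 : ℝ → ℝ) ((2 : ℝ) ^ l * x - k)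
        = (Set.Ico a (a + h)).indicator (1 : ℝ → ℝ) x := by
      rw [← hn_def]
      by_cases hx : x ∈ Set.Ico a (a + h)
      · rw [Set.indicator_of_mem ((memL x).mpr hx), Set.indicator_of_mem hx]
        simp
      · rw [Set.indicator_of_notMem (fun hcc => hx ((memL x).mp hcc)),
          Set.indicator_of_notMem hx]
    rw [haar, hR, hL, ← hc_def]
    simp only [Set.indicator_apply]
    by_cases h1 : x ∈ Set.Ico (a + h) (a + 2 * h) <;>
      by_cases h2 : x ∈ Set.Ico a (a + h) <;> simp [h1, h2] <;> ring
  -- continuity and integrability of f on [0,1)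
  have hcont : ContinuousOn f (Set.Ico (0 : ℝ) 1) := by
    have hol : HolderOnWith ⟨K, hK⟩ ⟨α, hα.le⟩ f (Set.Ico (0 : ℝ) 1) := by
      intro x hx y hy
      have hKco : (ENNReal.ofNNReal ⟨K, hK⟩) = ENNReal.ofReal K :=
        (ENNReal.ofReal_eq_coe_nnreal hK).symm
      rw [edist_dist, edist_dist, hKco]
      calc (ENNReal.ofReal (dist (f x) (f y)))
          ≤ ENNReal.ofReal (K * dist x y ^ α) := by
            apply ENNReal.ofReal_le_ofReal
            simpa [Real.dist_eq] using hf x hx y hy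
        _ = ENNReal.ofReal K * ENNReal.ofReal (dist x y) ^ ((⟨α, hα.le⟩ : NNReal) : ℝ) := by
            rw [ENNReal.ofReal_mul hK,
              ENNReal.ofReal_rpow_of_nonneg dist_nonneg hα.le]
    exact hol.continuousOn (by exact_mod_cast hα)
  have hbound : ∀ x ∈ Set.Ico (0 : ℝ) 1, |f x| ≤ |f 0| + K := by
    intro x hx
    have h0 : (0 : ℝ) ∈ Set.Ico (0 : ℝ) 1 := by constructor <;> norm_num
    have := hf x hx 0 h0
    have hx1 : |x - 0| ^ α ≤ 1 := by
      apply Real.rpow_le_one (abs_nonneg _) _ hα.le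
      rw [sub_zero, abs_of_nonneg hx.1]
      exact hx.2.le
    have : |f x - f 0| ≤ K := by nlinarith
    calc |f x| = |f x - f 0 + f 0| := by ring_nf
      _ ≤ |f x - f 0| + |f 0| := abs_add_le _ _
      _ ≤ |f 0| + K := by linarith
  have hint01 : IntegrableOn f (Set.Ico (0 : ℝ) 1) := by
    refine ⟨hcont.aestronglyMeasurable measurableSet_Ico, ?_⟩
    apply HasFiniteIntegral.restrict_of_bounded (C := |f 0| + K) measure_Ico_lt_top
    filter_upwards [ae_restrict_mem measurableSet_Ico] with x hx
    simpa using hbound x hx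
  have hsubR : Set.Ico (a + h) (a + 2 * h) ⊆ Set.Ico (0 : ℝ) 1 :=
    Set.Ico_subset_Ico (by linarith) (by linarith)
  have hsubL : Set.Ico a (a + h) ⊆ Set.Ico (0 : ℝ) 1 :=
    Set.Ico_subset_Ico (by linarith) (by linarith)
  have hintR : IntegrableOn f (Set.Ico (a + h) (a + 2 * h)) := hint01.mono_set hsubR
  have hintL : IntegrableOn f (Set.Ico a (a + h)) := hint01.mono_set hsubL
  -- split the integral
  have hsplit : ∫ x in Set.Ico (0 : ℝ) 1, f x * haar l k x
      = c * ((∫ x in Set.Ico (a + h) (a + 2 * h), f x) - ∫ x in Set.Ico a (a + h), f x) := by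
    rw [show (fun x => f x * haar l k x)
        = fun x => c * ((Set.Ico (a + h) (a + 2 * h)).indicator f x
            - (Set.Ico a (a + h)).indicator f x) from funext hrw]
    rw [integral_const_mul]
    congr 1
    rw [integral_sub ((hintR.integrable_indicator measurableSet_Ico).restrict)
        ((hintL.integrable_indicator measurableSet_Ico).restrict)]
    rw [setIntegral_indicator measurableSet_Ico, setIntegral_indicator measurableSet_Ico,
      Set.inter_eq_right.mpr hsubR, Set.inter_eq_right.mpr hsubL]
  -- substitution
  have hshift : (∫ x in Set.Ico (a + h) (a + 2 * h), f x)
      = ∫ x in Set.Ico a (a + h), f (x + h) := by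
    have e1 : (∫ x in Set.Ico (a + h) (a + 2 * h), f x)
        = ∫ x in (a + h)..(a + 2 * h), f x := by
      rw [intervalIntegral.integral_of_le (by linarith), integral_Ico_eq_integral_Ioo,
        integral_Ioc_eq_integral_Ioo]
    have e2 : (∫ x in Set.Ico a (a + h), f (x + h)) = ∫ x in a..(a + h), f (x + h) := by
      rw [intervalIntegral.integral_of_le (by linarith), integral_Ico_eq_integral_Ioo,
        integral_Ioc_eq_integral_Ioo]
    rw [e1, e2, intervalIntegral.integral_comp_add_right f h,
      show a + 2 * h = a + h + h by ring]
  -- integrability of the shifted function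
  have hmapsTo : ∀ x ∈ Set.Ico a (a + h), x + h ∈ Set.Ico (0 : ℝ) 1 := by
    intro x hx
    exact hsubR ⟨by linarith [hx.1], by linarith [hx.2]⟩
  have hcont' : ContinuousOn (fun x => f (x + h)) (Set.Ico a (a + h)) :=
    hcont.comp ((continuous_add_right h).continuousOn) hmapsTo
  have hintL' : IntegrableOn (fun x => f (x + h)) (Set.Ico a (a + h)) := by
    refine ⟨hcont'.aestronglyMeasurable measurableSet_Ico, ?_⟩
    apply HasFiniteIntegral.restrict_of_bounded (C := |f 0| + K) measure_Ico_lt_top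
    filter_upwards [ae_restrict_mem measurableSet_Ico] with x hx
    simpa using hbound (x + h) (hmapsTo x hx)
  -- the difference is an integral of increments
  have hdiff : (∫ x in Set.Ico (a + h) (a + 2 * h), f x) - (∫ x in Set.Ico a (a + h), f x)
      = ∫ x in Set.Ico a (a + h), (f (x + h) - f x) := by
    rw [hshift, ← integral_sub hintL' hintL]
  -- bound the increment integral
  have hαbound : ∀ x ∈ Set.Ico a (a + h), ‖f (x + h) - f x‖ ≤ K * h ^ α := by
    intro x hx
    have hx1 : x ∈ Set.Ico (0 : ℝ) 1 := hsubL hx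
    have hx2 : x + h ∈ Set.Ico (0 : ℝ) 1 := by
      refine hsubR ?_
      constructor <;> [linarith [hx.1]; linarith [hx.2]]
    have := hf (x + h) hx2 x hx1
    simpa [abs_of_pos hh] using this
  have hmeas : volume (Set.Ico a (a + h)) < ⊤ := measure_Ico_lt_top
  have hbnd : ‖∫ x in Set.Ico a (a + h), (f (x + h) - f x)‖ ≤ K * h ^ α * h := by
    have := norm_setIntegral_le_of_norm_le_const hmeas hαbound
    calc ‖∫ x in Set.Ico a (a + h), (f (x + h) - f x)‖
        ≤ K * h ^ α * (volume (Set.Ico a (a + h))).toReal := this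
      _ = K * h ^ α * h := by
          rw [Real.volume_Ico]
          congr 1
          rw [show a + h - a = h by ring, ENNReal.toReal_ofReal hh.le]
  -- final computation
  rw [hsplit, hdiff, abs_mul, abs_of_pos hc]
  have hfinal : c * (K * h ^ α * h) ≤ K * 2 ^ (-(l : ℝ) * (α + 1 / 2)) := by
    have h2l : (2 : ℝ) ^ ((l : ℝ)) = n := by rw [hn_def, Real.rpow_natCast]
    have hhrpow : h = (2 : ℝ) ^ (-((l : ℝ) + 1)) := by
      rw [Real.rpow_neg (by norm_num), Real.rpow_add (by norm_num : (0:ℝ) < 2), h2l,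
        Real.rpow_one, hh_def, one_div, mul_comm]
    have hhα : h ^ α = (2 : ℝ) ^ (-((l : ℝ) + 1) * α) := by
      rw [hhrpow, ← Real.rpow_mul (by norm_num : (0:ℝ) ≤ 2)]
    have key : c * (K * h ^ α * h)
        = K * ((2 : ℝ) ^ ((l : ℝ) / 2) * ((2 : ℝ) ^ (-((l : ℝ) + 1) * α)
            * (2 : ℝ) ^ (-((l : ℝ) + 1)))) := by
      rw [hc_def, hhα, hhrpow]; ring
    rw [key, ← Real.rpow_add (by norm_num : (0:ℝ) < 2),
      ← Real.rpow_add (by norm_num : (0:ℝ) < 2)]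
    apply mul_le_mul_of_nonneg_left _ hK
    rw [Real.rpow_le_rpow_left_iff (by norm_num : (1:ℝ) < 2)]
    have hexp : ((l:ℝ) / 2 + (-((l:ℝ) + 1) * α + -((l:ℝ) + 1)))
        = -(l:ℝ) * (α + 1 / 2) - (α + 1) := by ring
    rw [hexp]
    linarith
  calc c * |(∫ x in Set.Ico a (a + h), (f (x + h) - f x))|
      ≤ c * (K * h ^ α * h) := by
        apply mul_le_mul_of_nonneg_left _ hc.le
        exact hbnd
    _ ≤ K * 2 ^ (-(l : ℝ) * (α + 1 / 2)) := hfinal
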